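/- The array B constructed from an s-subset indexing (with a_s copies, 1 ≤ s ≤ t−1) is a valid [t, F', Z', S]-PDA with F' = Σ_{s=1}^{t−1} a_s·binom(t,s), Z' = Σ_{s=1}^{t−1} a_s·binom(t−1,s−1), and S = Σ_{s=1}^{t−1} a_s·binom(t,s+1). -/

import Mathlib

/-- Rows of the array `B` from the `t`-design based construction: pairs `(Y,i)` with
`Y ⊆ [t]`, `1 ≤ |Y| ≤ t−1` and `i ∈ [a_{|Y|}]`. -/
def HpRow (t : ℕ) (a : ℕ → ℕ) : Type :=
  Σ Y : {Y : Finset (Fin t) // 1 ≤ Y.card ∧ Y.card ≤ t - 1}, Fin (a Y.1.card)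

instance (t : ℕ) (a : ℕ → ℕ) : Fintype (HpRow t a) := by
  unfold HpRow; infer_instance

/-- The entry of `B` at row `(Y,i)` and column `j`: a star if `j ∈ Y`,
otherwise the symbol `(Y ∪ {j}, i)`. -/
def HpEntry (t : ℕ) (a : ℕ → ℕ) (r : HpRow t a) (j : Fin t) :
    Option (Finset (Fin t) × ℕ) :=
  if j ∈ r.1.1 then none else some (insert j r.1.1, (r.2 : ℕ))

open Finset in
theorem hp_sum_card_filter (t lo hi : ℕ) (g : ℕ → ℕ) :
    ∑ Y ∈ (univ : Finset (Finset (Fin t))).filter (fun Y => lo ≤ Y.card ∧ Y.card ≤ hi), g Y.card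
      = ∑ s ∈ Finset.Icc lo hi, g s * Nat.choose t s := by
  have h : (univ : Finset (Finset (Fin t))).filter (fun Y => lo ≤ Y.card ∧ Y.card ≤ hi)
      = (Finset.Icc lo hi).biUnion (fun s => Finset.powersetCard s univ) := by
    ext Y
    simp [Finset.mem_powersetCard, Finset.mem_Icc]
  rw [h, Finset.sum_biUnion]
  · refine Finset.sum_congr rfl (fun s _ => ?_)
    have h2 : ∑ Y ∈ Finset.powersetCard s (univ : Finset (Fin t)), g Y.card
        = ∑ _Y ∈ Finset.powersetCard s (univ : Finset (Fin t)), g s := by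
      refine Finset.sum_congr rfl (fun Y hY => ?_)
      rw [Finset.mem_powersetCard] at hY
      rw [hY.2]
    rw [h2, Finset.sum_const, Finset.card_powersetCard, Finset.card_univ, Fintype.card_fin,
      smul_eq_mul, mul_comm]
  · intro x _ y _ hxy
    apply Finset.disjoint_left.mpr
    intro Y hx hy
    rw [Finset.mem_powersetCard] at hx hy
    exact hxy (hx.2 ▸ hy.2)

open Finset in
theorem hp_count_mem_powersetCard (t s : ℕ) (hs : 1 ≤ s) (j : Fin t) :
    ((Finset.powersetCard s (univ : Finset (Fin t))).filter (fun Y => j ∈ Y)).card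
      = Nat.choose (t - 1) (s - 1) := by
  have : ((Finset.powersetCard s (univ : Finset (Fin t))).filter (fun Y => j ∈ Y)).card
      = (Finset.powersetCard (s - 1) ((univ : Finset (Fin t)).erase j)).card := by
    refine Finset.card_bij' (fun Y _ => Y.erase j) (fun X _ => insert j X) ?_ ?_ ?_ ?_
    · intro Y hY
      rw [Finset.mem_filter, Finset.mem_powersetCard] at hY
      rw [Finset.mem_powersetCard]
      exact ⟨Finset.erase_subset_erase j hY.1.1, by rw [Finset.card_erase_of_mem hY.2, hY.1.2]⟩
    · intro X hX
      rw [Finset.mem_powersetCard] at hX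
      have hjX : j ∉ X := fun h => (Finset.mem_erase.mp (hX.1 h)).1 rfl
      rw [Finset.mem_filter, Finset.mem_powersetCard]
      refine ⟨⟨Finset.subset_univ _, ?_⟩, Finset.mem_insert_self j X⟩
      rw [Finset.card_insert_of_notMem hjX, hX.2, Nat.sub_add_cancel hs]
    · intro Y hY
      rw [Finset.mem_filter] at hY
      exact Finset.insert_erase hY.2
    · intro X hX
      rw [Finset.mem_powersetCard] at hX
      have hjX : j ∉ X := fun h => (Finset.mem_erase.mp (hX.1 h)).1 rfl
      exact Finset.erase_insert hjX
  rw [this, Finset.card_powersetCard, Finset.card_erase_of_mem (Finset.mem_univ j),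
    Finset.card_univ, Fintype.card_fin]

open Finset in
theorem hp_sum_card_filter_mem (t : ℕ) (j : Fin t) (g : ℕ → ℕ) :
    ∑ Y ∈ (univ : Finset (Finset (Fin t))).filter
        (fun Y => (1 ≤ Y.card ∧ Y.card ≤ t - 1) ∧ j ∈ Y), g Y.card
      = ∑ s ∈ Finset.Icc 1 (t - 1), g s * Nat.choose (t - 1) (s - 1) := by
  have h : (univ : Finset (Finset (Fin t))).filter
        (fun Y => (1 ≤ Y.card ∧ Y.card ≤ t - 1) ∧ j ∈ Y)
      = (Finset.Icc 1 (t - 1)).biUnion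
          (fun s => (Finset.powersetCard s univ).filter (fun Y => j ∈ Y)) := by
    ext Y
    simp only [Finset.mem_filter, Finset.mem_univ, true_and, Finset.mem_biUnion,
      Finset.mem_Icc, Finset.mem_powersetCard]
    constructor
    · rintro ⟨⟨h1, h2⟩, h3⟩
      exact ⟨Y.card, ⟨h1, h2⟩, ⟨Finset.subset_univ _, rfl⟩, h3⟩
    · rintro ⟨s, hs, ⟨-, rfl⟩, h3⟩
      exact ⟨hs, h3⟩
  rw [h, Finset.sum_biUnion]
  · refine Finset.sum_congr rfl (fun s hs => ?_)
    rw [Finset.mem_Icc] at hs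
    have h2 : ∀ Y ∈ (Finset.powersetCard s (univ : Finset (Fin t))).filter (fun Y => j ∈ Y),
        g Y.card = g s := by
      intro Y hY
      rw [Finset.mem_filter, Finset.mem_powersetCard] at hY
      rw [hY.1.2]
    rw [Finset.sum_congr rfl h2, Finset.sum_const, hp_count_mem_powersetCard t s hs.1 j,
      smul_eq_mul, mul_comm]
  · intro x _ y _ hxy
    apply Finset.disjoint_left.mpr
    intro Y hx hy
    rw [Finset.mem_filter, Finset.mem_powersetCard] at hx hy
    exact hxy (hx.1.2 ▸ hy.1.2)

/-- The array `B` from the construction is a valid `[t, F', Z', S]`-PDA with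
`F' = Σ a_s·C(t,s)`, `Z' = Σ a_s·C(t−1,s−1)`, `S = Σ a_s·C(t,s+1)`:
it has `F'` rows, each column contains exactly `Z'` stars, exactly `S` distinct
non-star symbols occur, and any two equal non-star entries lie in distinct rows and
columns with stars at the two crossing positions. -/
theorem t_design_B_is_PDA (t : ℕ) (ht : 2 ≤ t) (a : ℕ → ℕ) :
    Fintype.card (HpRow t a) = ∑ s ∈ Finset.Icc 1 (t - 1), a s * Nat.choose t s ∧
    (∀ j : Fin t,
      (Finset.univ.filter (fun r : HpRow t a => HpEntry t a r j = none)).card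
        = ∑ s ∈ Finset.Icc 1 (t - 1), a s * Nat.choose (t - 1) (s - 1)) ∧
    (((Finset.univ : Finset (HpRow t a × Fin t)).image
        (fun p => HpEntry t a p.1 p.2)).erase none).card
      = ∑ s ∈ Finset.Icc 1 (t - 1), a s * Nat.choose t (s + 1) ∧
    (∀ (r₁ r₂ : HpRow t a) (j₁ j₂ : Fin t),
      HpEntry t a r₁ j₁ = HpEntry t a r₂ j₂ → HpEntry t a r₁ j₁ ≠ none →
      (r₁, j₁) ≠ (r₂, j₂) →
      r₁ ≠ r₂ ∧ j₁ ≠ j₂ ∧ HpEntry t a r₁ j₂ = none ∧ HpEntry t a r₂ j₁ = none) := by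
  refine ⟨?_, ?_, ?_, ?_⟩
  · -- Part 1 : number of rows
    rw [show Fintype.card (HpRow t a)
        = ∑ y : {Y : Finset (Fin t) // 1 ≤ Y.card ∧ Y.card ≤ t - 1},
            Fintype.card (Fin (a y.1.card)) from
      (Fintype.card_congr (Equiv.refl _)).trans Fintype.card_sigma]
    simp only [Fintype.card_fin]
    rw [← Finset.sum_subtype
      ((Finset.univ : Finset (Finset (Fin t))).filter (fun Y => 1 ≤ Y.card ∧ Y.card ≤ t - 1))
      (fun Y => by simp) (fun Y => a Y.card)]
    exact hp_sum_card_filter t 1 (t - 1) a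
  · -- Part 2 : stars per column
    intro j
    rw [Finset.card_filter]
    rw [(Fintype.sum_equiv (Equiv.refl _) _ _ (fun r => rfl)).trans
      (by exact Fintype.sum_sigma _ :
        ∑ r : HpRow t a, (if HpEntry t a r j = none then 1 else 0)
          = ∑ y : {Y : Finset (Fin t) // 1 ≤ Y.card ∧ Y.card ≤ t - 1},
              ∑ i : Fin (a y.1.card), (if HpEntry t a ⟨y, i⟩ j = none then 1 else 0))]
    have hent : ∀ (y : {Y : Finset (Fin t) // 1 ≤ Y.card ∧ Y.card ≤ t - 1})
        (i : Fin (a y.1.card)), (HpEntry t a ⟨y, i⟩ j = none) = (j ∈ y.1) := by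
      intro y i
      by_cases h : j ∈ y.1 <;> simp [HpEntry, h]
    simp only [hent]
    have hinner : ∀ (y : {Y : Finset (Fin t) // 1 ≤ Y.card ∧ Y.card ≤ t - 1}),
        ∑ _i : Fin (a y.1.card), (if j ∈ y.1 then 1 else 0)
          = (if j ∈ y.1 then a y.1.card else 0) := by
      intro y
      rw [Finset.sum_const, Finset.card_univ, Fintype.card_fin, smul_eq_mul]
      by_cases h : j ∈ y.1 <;> simp [h]
    rw [Finset.sum_congr rfl (fun y _ => hinner y)]
    rw [← Finset.sum_subtype
      ((Finset.univ : Finset (Finset (Fin t))).filter (fun Y => 1 ≤ Y.card ∧ Y.card ≤ t - 1))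
      (fun Y => by simp) (fun Y => if j ∈ Y then a Y.card else 0)]
    rw [← Finset.sum_filter, Finset.filter_filter]
    exact hp_sum_card_filter_mem t j a
  · -- Part 3 : number of symbols
    classical
    have hset : ((Finset.univ : Finset (HpRow t a × Fin t)).image
          (fun p => HpEntry t a p.1 p.2)).erase none
        = (Finset.univ.filter (fun X : Finset (Fin t) => 2 ≤ X.card ∧ X.card ≤ t)).biUnion
            (fun X => (Finset.range (a (X.card - 1))).image
              (fun i => (some (X, i) : Option (Finset (Fin t) × ℕ)))) := by
      ext o
      simp only [Finset.mem_erase, Finset.mem_image, Finset.mem_univ, true_and,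
        Finset.mem_biUnion, Finset.mem_filter, Finset.mem_range, Prod.exists]
      constructor
      · rintro ⟨hne, r, j, rfl⟩
        obtain ⟨⟨Y, hY1, hY2⟩, i⟩ := r
        by_cases hj : j ∈ Y
        · exact absurd (by simp [HpEntry, hj]) hne
        · refine ⟨insert j Y, ⟨?_, ?_⟩, i, ?_, ?_⟩
          · rw [Finset.card_insert_of_notMem hj]; omega
          · rw [Finset.card_insert_of_notMem hj]; omega
          · rw [Finset.card_insert_of_notMem hj, Nat.add_sub_cancel]; exact i.isLt
          · simp [HpEntry, hj]
      · rintro ⟨X, ⟨h2, hXt⟩, i, hi, rfl⟩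
        obtain ⟨j, hj⟩ := Finset.card_pos.mp (by omega : 0 < X.card)
        refine ⟨Option.some_ne_none _, ⟨⟨X.erase j, ?_, ?_⟩, ⟨i, ?_⟩⟩, j, ?_⟩
        · rw [Finset.card_erase_of_mem hj]; omega
        · rw [Finset.card_erase_of_mem hj]; omega
        · show i < a (X.erase j).card
          rw [Finset.card_erase_of_mem hj]; exact hi
        · simp [HpEntry, Finset.notMem_erase, Finset.insert_erase hj,
            Finset.card_erase_of_mem hj]
    rw [hset, Finset.card_biUnion]
    · have hc : ∀ X ∈ Finset.univ.filter (fun X : Finset (Fin t) => 2 ≤ X.card ∧ X.card ≤ t),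
          ((Finset.range (a (X.card - 1))).image
            (fun i => (some (X, i) : Option (Finset (Fin t) × ℕ)))).card = a (X.card - 1) := by
        intro X _
        rw [Finset.card_image_of_injective _ (fun i1 i2 h => by simpa using h),
          Finset.card_range]
      rw [Finset.sum_congr rfl hc,
        hp_sum_card_filter t 2 t (fun c => a (c - 1)),
        show Finset.Icc 2 t = (Finset.Icc 1 (t - 1)).map (addRightEmbedding 1) from by
          rw [Finset.map_add_right_Icc]; congr 1; omega,
        Finset.sum_map]
      refine Finset.sum_congr rfl (fun s hs => ?_)
      simp [addRightEmbedding]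
    · intro x _ y _ hxy
      simp only [Finset.disjoint_left, Finset.mem_image, Finset.mem_range]
      rintro o ⟨i1, _, rfl⟩ ⟨i2, _, ho⟩
      exact hxy (congrArg Prod.fst (Option.some.inj ho)).symm
  · -- Part 4 : PDA property
    rintro ⟨⟨Y₁, hY₁⟩, i₁⟩ ⟨⟨Y₂, hY₂⟩, i₂⟩ j₁ j₂ heq hne hpair
    have hj₁ : j₁ ∉ Y₁ := by
      intro h
      exact hne (by simp [HpEntry, h])
    have hj₂ : j₂ ∉ Y₂ := by
      intro h
      rw [show HpEntry t a ⟨⟨Y₂, hY₂⟩, i₂⟩ j₂ = none from by simp [HpEntry, h]] at heq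
      exact hne heq
    simp only [HpEntry, hj₁, hj₂, if_false, ite_false, Option.some.injEq, Prod.mk.injEq] at heq
    obtain ⟨hins, hii⟩ := heq
    have hcards : Y₁.card = Y₂.card := by
      have := congrArg Finset.card hins
      rw [Finset.card_insert_of_notMem hj₁, Finset.card_insert_of_notMem hj₂] at this
      omega
    have hjj : j₁ ≠ j₂ := by
      intro h
      subst h
      have hYY : Y₁ = Y₂ := by
        have := congrArg (fun Z => Finset.erase Z j₁) hins
        simpa [Finset.erase_insert hj₁, Finset.erase_insert hj₂] using this
      subst hYY
      have hi : i₁ = i₂ := Fin.ext hii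
      subst hi
      exact hpair rfl
    refine ⟨?_, hjj, ?_, ?_⟩
    · intro h
      have hYY : Y₁ = Y₂ := congrArg (fun r : HpRow t a => r.1.1) h
      have : j₁ ∈ insert j₂ Y₂ := hins ▸ Finset.mem_insert_self j₁ Y₁
      rw [Finset.mem_insert] at this
      rcases this with h' | h'
      · exact hjj h'
      · exact hj₁ (hYY ▸ h')
    · have : j₂ ∈ insert j₁ Y₁ := hins ▸ Finset.mem_insert_self j₂ Y₂
      rw [Finset.mem_insert] at this
      rcases this with h' | h'
      · exact absurd h'.symm hjj
      · simp [HpEntry, h']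
    · have : j₁ ∈ insert j₂ Y₂ := hins ▸ Finset.mem_insert_self j₁ Y₁
      rw [Finset.mem_insert] at this
      rcases this with h' | h'
      · exact absurd h' hjj
      · simp [HpEntry, h']
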